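/- Under the assumption that there exist $\beta \in (0,1]$ and $\mathfrak{C} > 0$ with $|\{x \in S : |\bar{p}(x)| \le \varepsilon\}| \le \mathfrak{C}\varepsilon^{\beta}$ for all $\varepsilon > 0$, and the bang-bang characterizations of $\bar{u}$ by $\bar{p}$ and of $\bar{\mathfrak{u}}$ by $\bar{p}_\ell$ as above, one has $\|\bar{u} - \bar{\mathfrak{u}}\|_{L^1(S)} \le (b-a)\mathfrak{C}\,\|\bar{p} - \bar{p}_\ell\|_{L^\infty(\Omega)}^{\beta}$. -/

import Mathlib

open MeasureTheory

/-- Under the level-set measure assumption, the bang-bang laws for `ū`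
(w.r.t. `p̄`) and `𝔲` (w.r.t. `p̄ℓ`) imply
`‖ū - 𝔲‖_{L¹(S)} ≤ (b-a) 𝔠 ‖p̄ - p̄ℓ‖_{L^∞}^β`. -/
theorem control_error_L1_bound
    {α : Type*} [MeasurableSpace α] (μ : Measure α) [IsFiniteMeasure μ]
    (a b : ℝ) (hab : a < b)
    (ubar ufrak pbar pbarl : α → ℝ)
    (hmu : Measurable ubar) (hmv : Measurable ufrak)
    (hmp : Measurable pbar) (hmpl : Measurable pbarl)
    (hu_ad : ∀ᵐ x ∂μ, a ≤ ubar x ∧ ubar x ≤ b)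
    (hv_ad : ∀ᵐ x ∂μ, a ≤ ufrak x ∧ ufrak x ≤ b)
    (hua : ∀ᵐ x ∂μ, 0 < pbar x → ubar x = a)
    (hub : ∀ᵐ x ∂μ, pbar x < 0 → ubar x = b)
    (hva : ∀ᵐ x ∂μ, 0 < pbarl x → ufrak x = a)
    (hvb : ∀ᵐ x ∂μ, pbarl x < 0 → ufrak x = b)
    (β C : ℝ) (hβ0 : 0 < β) (hβ1 : β ≤ 1) (hC : 0 < C)
    (hmeas : ∀ ε : ℝ, 0 < ε →
      (μ {x | pbar x ≠ 0 ∧ |pbar x| ≤ ε}).toReal ≤ C * ε ^ β)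
    (hpinf : MemLp (fun x => pbar x - pbarl x) ⊤ μ) :
    ∫ x in {x | pbar x ≠ 0}, |ubar x - ufrak x| ∂μ
      ≤ (b - a) * C *
        ((eLpNorm (fun x => pbar x - pbarl x) ⊤ μ).toReal) ^ β := by
  set f : α → ℝ := fun x => pbar x - pbarl x with hf
  set ε : ℝ := (eLpNorm f ⊤ μ).toReal with hε
  have hS : MeasurableSet {x | pbar x ≠ 0} := (hmp (measurableSet_singleton 0)).compl
  have hεnn : 0 ≤ ε := ENNReal.toReal_nonneg
  -- a.e. bound |f x| ≤ ε
  have htop : eLpNorm f ⊤ μ ≠ ⊤ := hpinf.2.ne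
  have hae : ∀ᵐ x ∂μ, |f x| ≤ ε := by
    have h := ae_le_eLpNormEssSup (f := f) (μ := μ)
    rw [eLpNorm_exponent_top] at htop
    filter_upwards [h] with x hx
    have h2 := ENNReal.toReal_mono htop hx
    simpa [eLpNorm_exponent_top, Real.norm_eq_abs, hε] using h2
  rcases eq_or_lt_of_le hεnn with hε0 | hεpos
  · -- ε = 0 : f = 0 a.e., so integrand vanishes a.e. on S
    have hzero : ∀ᵐ x ∂μ, x ∈ {x | pbar x ≠ 0} → |ubar x - ufrak x| = 0 := by
      filter_upwards [hae, hua, hub, hva, hvb] with x h1 h2 h3 h4 h5 hxS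
      have hfx : pbar x = pbarl x := by
        have h0 := abs_le.mp h1
        have hfe : f x = pbar x - pbarl x := rfl
        rw [hfe] at h0
        linarith [h0.1, h0.2]
      rcases lt_or_gt_of_ne (show pbar x ≠ 0 from hxS) with hneg | hpos
      · rw [h3 hneg, h5 (by rw [← hfx]; exact hneg)]; simp
      · rw [h2 hpos, h4 (by rw [← hfx]; exact hpos)]; simp
    have : ∫ x in {x | pbar x ≠ 0}, |ubar x - ufrak x| ∂μ = 0 := by
      rw [setIntegral_congr_ae hS hzero]
      simp
    rw [this, ← hε0, Real.zero_rpow hβ0.ne']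
    simp
  · -- ε > 0
    set T : Set α := {x | pbar x ≠ 0 ∧ |pbar x| ≤ ε} with hT
    have hTmeas : MeasurableSet T := by
      apply MeasurableSet.inter
      · exact (hmp (measurableSet_singleton 0)).compl
      · exact (hmp.abs measurableSet_Iic)
    set g : α → ℝ := T.indicator (fun _ => b - a) with hg
    have key : ∀ᵐ x ∂μ, x ∈ {x | pbar x ≠ 0} → |ubar x - ufrak x| ≤ g x := by
      filter_upwards [hae, hua, hub, hva, hvb, hu_ad, hv_ad]
        with x h1 h2 h3 h4 h5 h6 h7 hxS
      have habs := abs_le.mp h1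
      have hfe : f x = pbar x - pbarl x := rfl
      rw [hfe] at habs
      by_cases hin : |pbar x| ≤ ε
      · have hgx : g x = b - a := Set.indicator_of_mem (show x ∈ T from ⟨hxS, hin⟩) _
        rw [hgx, abs_sub_le_iff]
        constructor <;> linarith [h6.1, h6.2, h7.1, h7.2]
      · have hgx : g x = 0 := Set.indicator_of_notMem (fun hm => hin hm.2) _
        push_neg at hin
        rcases lt_or_gt_of_ne (show pbar x ≠ 0 from hxS) with hneg | hpos
        · have : pbarl x < 0 := by
            rw [abs_of_neg hneg] at hin; linarith [habs.1, habs.2]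
          rw [h3 hneg, h5 this, hgx]; simp
        · have : 0 < pbarl x := by
            rw [abs_of_pos hpos] at hin; linarith [habs.1, habs.2]
          rw [h2 hpos, h4 this, hgx]; simp
    have hint1 : Integrable (fun x => |ubar x - ufrak x|)
        (μ.restrict {x | pbar x ≠ 0}) := by
      refine (integrable_const ((|a| + |b|) * 2)).mono' ?_ ?_
      · exact ((hmu.sub hmv).abs).aestronglyMeasurable
      · refine ae_restrict_of_ae ?_
        filter_upwards [hu_ad, hv_ad] with x h6 h7
        have hu : |ubar x| ≤ |a| + |b| := by
          rw [abs_le]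
          cases abs_cases a <;> cases abs_cases b <;>
            constructor <;> linarith [h6.1, h6.2]
        have hv : |ufrak x| ≤ |a| + |b| := by
          rw [abs_le]
          cases abs_cases a <;> cases abs_cases b <;>
            constructor <;> linarith [h7.1, h7.2]
        have hu' := abs_le.mp hu
        have hv' := abs_le.mp hv
        rw [Real.norm_eq_abs, abs_abs, abs_sub_le_iff]
        constructor <;> linarith
    have hint2 : Integrable g (μ.restrict {x | pbar x ≠ 0}) :=
      ((integrable_const (b - a)).indicator hTmeas).restrict
    have step1 : ∫ x in {x | pbar x ≠ 0}, |ubar x - ufrak x| ∂μ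
        ≤ ∫ x in {x | pbar x ≠ 0}, g x ∂μ := by
      refine integral_mono_ae hint1 hint2 ?_
      exact (ae_restrict_iff' hS).mpr key
    have step2 : ∫ x in {x | pbar x ≠ 0}, g x ∂μ
        = (b - a) * (μ T).toReal := by
      rw [hg, setIntegral_indicator hTmeas]
      have hST : {x | pbar x ≠ 0} ∩ T = T := by
        ext x; exact ⟨fun h => h.2, fun h => ⟨h.1, h⟩⟩
      rw [hST, setIntegral_const, smul_eq_mul, mul_comm]; rfl
    have step3 : (μ T).toReal ≤ C * ε ^ β := hmeas ε hεpos
    calc ∫ x in {x | pbar x ≠ 0}, |ubar x - ufrak x| ∂μ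
        ≤ (b - a) * (μ T).toReal := by rw [← step2]; exact step1
      _ ≤ (b - a) * (C * ε ^ β) := by
          apply mul_le_mul_of_nonneg_left step3 (by linarith)
      _ = (b - a) * C * ε ^ β := by ring
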